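/- If T(1,0) = 1/μ, and for n ≥ 1, T(1,n) = 1/(λm(n)+μ) + (λm(n)/(λm(n)+μ))·T(1,n) + (μ/(λm(n)+μ))·T(2,n) and T(2,n) = 1/(λ+θ) + (λ/(λ+θ))·T(1,n) + (θ/(λ+θ))·T(1,n-1), then T(1,n) = n·(λ+θ+μ)/(μθ) + 1/μ for all n ≥ 0. -/
import Mathlib

theorem busy_sojourn_time (lam mu th : ℝ) (hlam : 0 < lam) (hmu : 0 < mu) (hth : 0 < th)
    (m : ℕ → ℝ) (hm : ∀ n, m n ∈ Set.Icc (0 : ℝ) 1)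
    (T1 T2 : ℕ → ℝ)
    (h10 : T1 0 = 1 / mu)
    (h1 : ∀ n, 1 ≤ n → T1 n = 1 / (lam * m n + mu)
      + (lam * m n / (lam * m n + mu)) * T1 n + (mu / (lam * m n + mu)) * T2 n)
    (h2 : ∀ n, 1 ≤ n → T2 n = 1 / (lam + th)
      + (lam / (lam + th)) * T1 n + (th / (lam + th)) * T1 (n - 1)) :
    ∀ n : ℕ, T1 n = n * ((lam + th + mu) / (mu * th)) + 1 / mu := by
  intro n
  induction n with
  | zero => simpa using h10
  | succ k ih =>
    have hmk := (hm (k + 1)).1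
    have hpos : 0 < lam * m (k + 1) + mu := by nlinarith
    have hlt : 0 < lam + th := by linarith
    have e1 := h1 (k + 1) (by omega)
    have e2 := h2 (k + 1) (by omega)
    rw [Nat.add_sub_cancel] at e2
    have key : mu * T1 (k + 1) = 1 + mu * T2 (k + 1) := by
      field_simp at e1
      nlinarith [e1]
    field_simp at e2
    have step' : mu * th * T1 (k + 1) = mu * th * T1 k + (lam + th + mu) := by
      linear_combination (lam + th) * key + mu * e2
    have step : T1 (k + 1) = T1 k + (lam + th + mu) / (mu * th) := by
      field_simp
      linear_combination step'
    rw [step, ih]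
    push_cast
    ring
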